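/- Let q be an odd prime power. Define N_α = I_{q+1} ⊗ (J_{q²} − I_q ⊗ J_q) + Σ_{a∈F_q} P_a ⊗ (C_{a,α} R) for α ∈ F_q, where P_a are the symmetric permutation matrices of a symmetric Latin square of order q+1 with constant diagonal on F_q ∪ {x}, C_{a,α} the auxiliary matrices from the multiplication table of F_q, and R the q²×q² exchange matrix. Then for all α, β ∈ F_q: N_α N_β = q² (I_{q+1} ⊗ I_q ⊗ φ(α−β)) + (q² − 4q + 3)(I_{q+1} ⊗ J_{q²}) + 3(q−1) J_{(q+1)q²}. -/

import Mathlib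

open Matrix Kronecker BigOperators
open scoped Classical

noncomputable section

variable (F : Type*) [Field F] [Fintype F]

/-- The regular permutation representation of the additive group of `F`:
`φ(α)` is the permutation matrix of translation by `α`. -/
def phi (α : F) : Matrix F F ℝ :=
  Matrix.of fun x y => if x + α = y then 1 else 0

/-- The auxiliary `q² × q²` matrix `C_{a,α}` whose `(β,β')`-block is `φ(a(β'-β)+α)`. -/
def Cmat (a α : F) : Matrix (F × F) (F × F) ℝ :=
  Matrix.of fun p q => if p.2 + (a * (q.1 - p.1) + α) = q.2 then 1 else 0

/-- All-ones matrix. -/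
def Jmat (ι : Type*) : Matrix ι ι ℝ := Matrix.of fun _ _ => 1

/-- The `q² × q²` back identity (exchange) matrix indexed by `F × F`,
corresponding to negation of indices. -/
def Rmat : Matrix (F × F) (F × F) ℝ :=
  Matrix.of fun p q => if q = (-p.1, -p.2) then 1 else 0

/-- The hypotheses that `P` is the family of symmetric permutation matrices of a
symmetric Latin square of order `q+1` on the symbol set `F ∪ {x}` (encoded as `Option F`,
`x = none`) with constant diagonal `x`. -/
def IsLatinFamily (P : Option F → Matrix (Option F) (Option F) ℝ) : Prop :=
  P none = 1 ∧
  (∀ a, (P a)ᵀ = P a) ∧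
  (∀ a, P a * P a = 1) ∧
  (∀ a, P a * Jmat (Option F) = Jmat (Option F)) ∧
  (∑ a : Option F, P a = Jmat (Option F)) ∧
  (∀ a : F, ∀ i, P (some a) i i = 0)

/-- `N_α = I_{q+1} ⊗ (J_{q²} - I_q ⊗ J_q) + ∑_{a ∈ F_q} P_a ⊗ (C_{a,α} R)`. -/
def Nmat (P : Option F → Matrix (Option F) (Option F) ℝ) (α : F) :
    Matrix (Option F × (F × F)) (Option F × (F × F)) ℝ :=
  (1 : Matrix (Option F) (Option F) ℝ) ⊗ₖ (Jmat (F × F) - (1 : Matrix F F ℝ) ⊗ₖ Jmat F)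
    + ∑ a : F, P (some a) ⊗ₖ (Cmat F a α * Rmat F)

end

noncomputable section Helpers
set_option linter.unusedSectionVars false
variable (F : Type*) [Field F] [Fintype F]

lemma sum_ind {ι : Type*} [Fintype ι] (p : ι → Prop) [DecidablePred p] (c : ι)
    (h : ∀ x, p x ↔ x = c) : ∑ x : ι, (if p x then (1:ℝ) else 0) = 1 := by
  simp [fun x => propext (h x)]

lemma sum_ind_const (p : F → Prop) [DecidablePred p] (q : Prop) [Decidable q]
    (h : ∀ x, p x ↔ q) : ∑ x : F, (if p x then (1:ℝ) else 0)
      = (Fintype.card F : ℝ) * (if q then 1 else 0) := by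
  simp only [fun x => propext (h x)]
  simp [Finset.sum_const, mul_comm]

lemma mul_R_apply (M : Matrix (F × F) (F × F) ℝ) (p r : F × F) :
    (M * Rmat F) p r = M p (-r.1, -r.2) := by
  rw [mul_apply]
  have : ∀ k : F × F, (r = (-k.1, -k.2)) = (k = (-r.1, -r.2)) := by
    intro k; apply propext
    constructor <;> (rintro rfl; simp [Prod.ext_iff])
  simp only [Rmat, Matrix.of_apply, this, mul_ite, mul_one, mul_zero]
  simp [Finset.sum_ite_eq']

lemma R_mul_apply (M : Matrix (F × F) (F × F) ℝ) (p r : F × F) :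
    (Rmat F * M) p r = M (-p.1, -p.2) r := by
  rw [mul_apply]
  simp only [Rmat, Matrix.of_apply, ite_mul, one_mul, zero_mul]
  simp [Finset.sum_ite_eq']

lemma Rmul : Rmat F * Rmat F = 1 := by
  ext p r
  rw [mul_R_apply]
  simp only [Rmat, Matrix.of_apply, one_apply, Prod.ext_iff]
  simp [eq_comm, neg_eq_iff_eq_neg, and_comm]

lemma RmulC (a α : F) : Rmat F * Cmat F a α = Cmat F a (-α) * Rmat F := by
  ext ⟨p1, p2⟩ ⟨r1, r2⟩
  rw [mul_R_apply, R_mul_apply]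
  simp only [Cmat, Matrix.of_apply]
  congr 1
  apply propext; constructor <;> intro h <;> linear_combination -h

lemma J_mul_R : Jmat (F × F) * Rmat F = Jmat (F × F) := by
  ext p r; rw [mul_R_apply]; simp [Jmat]

lemma R_mul_J : Rmat F * Jmat (F × F) = Jmat (F × F) := by
  ext p r; rw [R_mul_apply]; simp [Jmat]

lemma Jmul (ι : Type*) [Fintype ι] : Jmat ι * Jmat ι = (Fintype.card ι : ℝ) • Jmat ι := by
  ext i j
  rw [mul_apply, Matrix.smul_apply]
  simp [Jmat, Finset.card_univ]

lemma CmulC_same (a α β : F) :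
    Cmat F a α * Cmat F a β = (Fintype.card F : ℝ) • Cmat F a (α + β) := by
  ext ⟨p1, p2⟩ ⟨r1, r2⟩
  simp only [Cmat, mul_apply, Fintype.sum_prod_type, Matrix.of_apply, Matrix.smul_apply, smul_eq_mul,
    ite_mul, one_mul, zero_mul, Finset.sum_ite_eq, Finset.mem_univ, if_true]
  exact sum_ind_const F _ _ (fun x => by constructor <;> intro h <;> linear_combination h)

lemma CmulC_ne {a b : F} (hab : a ≠ b) (α β : F) :
    Cmat F a α * Cmat F b β = Jmat (F × F) := by
  ext ⟨p1, p2⟩ ⟨r1, r2⟩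
  simp only [Cmat, Jmat, mul_apply, Fintype.sum_prod_type, Matrix.of_apply, ite_mul, one_mul,
    zero_mul, Finset.sum_ite_eq, Finset.mem_univ, if_true]
  refine sum_ind _ ((r2 - p2 - α - β + a * p1 - b * r1) / (a - b)) (fun x => ?_)
  rw [eq_div_iff (sub_ne_zero.mpr hab)]
  constructor <;> intro h <;> linear_combination h

lemma kron_J (ι κ : Type*) : Jmat ι ⊗ₖ Jmat κ = Jmat (ι × κ) := by
  ext p r; simp [Jmat, kroneckerMap_apply]

lemma J_mul_C (a α : F) :
    Jmat (F × F) * Cmat F a α = (Fintype.card F : ℝ) • Jmat (F × F) := by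
  ext ⟨p1, p2⟩ ⟨r1, r2⟩
  simp only [Jmat, Cmat, mul_apply, Fintype.sum_prod_type, Matrix.of_apply, one_mul,
    Matrix.smul_apply, smul_eq_mul, mul_one]
  have : ∀ k1 : F, ∑ k2 : F, (if k2 + (a * (r1 - k1) + α) = r2 then (1:ℝ) else 0) = 1 := by
    intro k1
    exact sum_ind _ (r2 - (a * (r1 - k1) + α)) (fun x => by
      constructor <;> intro h <;> linear_combination h)
  simp [this, Finset.card_univ]

lemma C_mul_J (a α : F) :
    Cmat F a α * Jmat (F × F) = (Fintype.card F : ℝ) • Jmat (F × F) := by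
  ext ⟨p1, p2⟩ ⟨r1, r2⟩
  simp only [Jmat, Cmat, mul_apply, Fintype.sum_prod_type, Matrix.of_apply, mul_one,
    Matrix.smul_apply, smul_eq_mul]
  have : ∀ k1 : F, ∑ k2 : F, (if p2 + (a * (k1 - p1) + α) = k2 then (1:ℝ) else 0) = 1 := by
    intro k1
    exact sum_ind _ (p2 + (a * (k1 - p1) + α)) (fun x => eq_comm)
  simp [this, Finset.card_univ]

lemma IJ_mul_C (a α : F) :
    ((1 : Matrix F F ℝ) ⊗ₖ Jmat F) * Cmat F a α = Jmat (F × F) := by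
  ext ⟨p1, p2⟩ ⟨r1, r2⟩
  simp only [Jmat, Cmat, mul_apply, Fintype.sum_prod_type, Matrix.of_apply,
    kroneckerMap_apply, one_apply, ite_mul, one_mul, zero_mul, mul_one]
  rw [Finset.sum_comm]
  simp only [Finset.sum_ite_eq, Finset.mem_univ, if_true]
  exact sum_ind _ (r2 - (a * (r1 - p1) + α)) (fun x => by
    constructor <;> intro h <;> linear_combination h)

lemma C_mul_IJ (a α : F) :
    Cmat F a α * ((1 : Matrix F F ℝ) ⊗ₖ Jmat F) = Jmat (F × F) := by
  ext ⟨p1, p2⟩ ⟨r1, r2⟩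
  simp only [Jmat, Cmat, mul_apply, Fintype.sum_prod_type, Matrix.of_apply,
    kroneckerMap_apply, one_apply, mul_ite, mul_one, mul_zero, ite_mul, zero_mul, one_mul]
  rw [Finset.sum_comm]
  simp only [Finset.sum_ite_eq', Finset.mem_univ, if_true]
  exact sum_ind _ (p2 + (a * (r1 - p1) + α)) (fun x => eq_comm)

lemma sum_C (γ : F) :
    ∑ a : F, Cmat F a γ
      = (Fintype.card F : ℝ) • ((1 : Matrix F F ℝ) ⊗ₖ phi F γ)
        + Jmat (F × F) - (1 : Matrix F F ℝ) ⊗ₖ Jmat F := by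
  ext ⟨p1, p2⟩ ⟨r1, r2⟩
  simp only [Cmat, Jmat, phi, Matrix.sum_apply, Matrix.sub_apply, Matrix.add_apply, Matrix.smul_apply, smul_eq_mul,
    Matrix.of_apply, kroneckerMap_apply, one_apply]
  by_cases h : p1 = r1
  · subst h
    simp [Finset.card_univ]
  · have h2 : ∀ x : F, (p2 + (x * (r1 - p1) + γ) = r2) ↔ (x = (r2 - p2 - γ) / (r1 - p1)) := by
      intro x
      rw [eq_div_iff (sub_ne_zero.mpr (Ne.symm h))]
      constructor <;> intro hx <;> linear_combination hx
    rw [sum_ind _ _ h2]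
    simp [h]

lemma sum_kron {ι κ μ : Type*} (s : Finset μ) (f : μ → Matrix ι ι ℝ) (B : Matrix κ κ ℝ) :
    (∑ i ∈ s, f i) ⊗ₖ B = ∑ i ∈ s, f i ⊗ₖ B := by
  ext p r
  simp [kroneckerMap_apply, Matrix.sum_apply, Finset.sum_mul]

lemma kron_sum {ι κ μ : Type*} (s : Finset μ) (A : Matrix ι ι ℝ) (f : μ → Matrix κ κ ℝ) :
    A ⊗ₖ (∑ i ∈ s, f i) = ∑ i ∈ s, A ⊗ₖ f i := by
  ext p r
  simp [kroneckerMap_apply, Matrix.sum_apply, Finset.mul_sum]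

lemma sub_kron {ι κ : Type*} (A B : Matrix ι ι ℝ) (C : Matrix κ κ ℝ) :
    (A - B) ⊗ₖ C = A ⊗ₖ C - B ⊗ₖ C := by
  ext p r
  simp [kroneckerMap_apply, sub_mul]

lemma kron_sub {ι κ : Type*} (A : Matrix ι ι ℝ) (B C : Matrix κ κ ℝ) :
    A ⊗ₖ (B - C) = A ⊗ₖ B - A ⊗ₖ C := by
  ext p r
  simp [kroneckerMap_apply, mul_sub]

lemma sum_eq_offdiag {ι M : Type*} [Fintype ι] [DecidableEq ι] [AddCommGroup M]
    (f g : ι → M) (a : ι) (h : ∀ b, b ≠ a → f b = g b) :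
    ∑ b, f b = (∑ b, g b) + (f a - g a) := by
  have h2 : ∑ b : ι, (f b - g b) = f a - g a :=
    Finset.sum_eq_single a (fun b _ hb => by rw [h b hb, sub_self])
      (fun hmem => absurd (Finset.mem_univ a) hmem)
  rw [← h2, Finset.sum_sub_distrib]
  abel

end Helpers


/-- `N_α N_β = q² (I_{q+1} ⊗ I_q ⊗ φ(α-β)) + (q² - 4q + 3)(I_{q+1} ⊗ J_{q²})
+ 3(q-1) J_{(q+1)q²}`. -/
theorem Nmat_mul (F : Type*) [Field F] [Fintype F] (hodd : Odd (Fintype.card F))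
    (P : Option F → Matrix (Option F) (Option F) ℝ) (hP : IsLatinFamily F P)
    (α β : F) :
    Nmat F P α * Nmat F P β
      = ((Fintype.card F : ℝ) ^ 2) •
          ((1 : Matrix (Option F) (Option F) ℝ) ⊗ₖ ((1 : Matrix F F ℝ) ⊗ₖ phi F (α - β)))
        + ((Fintype.card F : ℝ) ^ 2 - 4 * (Fintype.card F : ℝ) + 3) •
            ((1 : Matrix (Option F) (Option F) ℝ) ⊗ₖ Jmat (F × F))
        + (3 * ((Fintype.card F : ℝ) - 1)) • Jmat (Option F × (F × F)) := by
  obtain ⟨hP1, hPsym, hPsq, hPJ, hPsum, hPdiag⟩ := hP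
  have cardFF : ((Fintype.card (F × F) : ℝ)) = (Fintype.card F : ℝ) ^ 2 := by
    rw [Fintype.card_prod]; push_cast; ring
  have cardO : ((Fintype.card (Option F) : ℝ)) = (Fintype.card F : ℝ) + 1 := by
    rw [Fintype.card_option]; push_cast; ring
  have sumP : ∑ a : F, P (some a) = Jmat (Option F) - 1 := by
    have h := hPsum
    rw [Fintype.sum_option, hP1] at h
    exact eq_sub_of_add_eq' h
  -- B * B
  have hBB : (Jmat (F × F) - (1 : Matrix F F ℝ) ⊗ₖ Jmat F)
      * (Jmat (F × F) - (1 : Matrix F F ℝ) ⊗ₖ Jmat F)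
      = ((Fintype.card F : ℝ) ^ 2 - 2 * (Fintype.card F : ℝ)) • Jmat (F × F)
        + (Fintype.card F : ℝ) • ((1 : Matrix F F ℝ) ⊗ₖ Jmat F) := by
    have hIJJ : ((1 : Matrix F F ℝ) ⊗ₖ Jmat F) * Jmat (F × F)
        = (Fintype.card F : ℝ) • Jmat (F × F) := by
      rw [← kron_J F F, ← mul_kronecker_mul, Matrix.one_mul, Jmul, kronecker_smul, kron_J]
    have hJIJ : Jmat (F × F) * ((1 : Matrix F F ℝ) ⊗ₖ Jmat F)
        = (Fintype.card F : ℝ) • Jmat (F × F) := by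
      rw [← kron_J F F, ← mul_kronecker_mul, Matrix.mul_one, Jmul, kronecker_smul, kron_J]
    have hIJIJ : ((1 : Matrix F F ℝ) ⊗ₖ Jmat F) * ((1 : Matrix F F ℝ) ⊗ₖ Jmat F)
        = (Fintype.card F : ℝ) • ((1 : Matrix F F ℝ) ⊗ₖ Jmat F) := by
      rw [← mul_kronecker_mul, Matrix.mul_one, Jmul, kronecker_smul]
    rw [sub_mul, mul_sub, mul_sub, Jmul, cardFF, hIJJ, hJIJ, hIJIJ]
    module
  -- B * (C β R)
  have hBE : ∀ b : F, (Jmat (F × F) - (1 : Matrix F F ℝ) ⊗ₖ Jmat F) * (Cmat F b β * Rmat F)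
      = ((Fintype.card F : ℝ) - 1) • Jmat (F × F) := by
    intro b
    rw [← mul_assoc, sub_mul, J_mul_C, IJ_mul_C, sub_mul, smul_mul_assoc, J_mul_R]
    module
  -- (C α R) * B
  have hDB : ∀ a : F, (Cmat F a α * Rmat F) * (Jmat (F × F) - (1 : Matrix F F ℝ) ⊗ₖ Jmat F)
      = ((Fintype.card F : ℝ) - 1) • Jmat (F × F) := by
    intro a
    have h1 : Cmat F a α * Rmat F = Rmat F * Cmat F a (-α) := by
      rw [RmulC, neg_neg]
    rw [h1, mul_assoc, mul_sub, C_mul_J, C_mul_IJ, mul_sub, mul_smul_comm, R_mul_J]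
    module
  -- (C a α R) * (C b β R) = C a α * C b (-β)
  have hDE : ∀ a b : F, (Cmat F a α * Rmat F) * (Cmat F b β * Rmat F)
      = Cmat F a α * Cmat F b (-β) := by
    intro a b
    have h1 : Rmat F * (Cmat F b β * Rmat F) = Cmat F b (-β) := by
      rw [← mul_assoc, RmulC, mul_assoc, Rmul, mul_one]
    rw [mul_assoc, h1]
  -- (J' - 1)^2
  have hJO : (Jmat (Option F) - 1) * (Jmat (Option F) - 1)
      = ((Fintype.card F : ℝ) - 1) • Jmat (Option F) + 1 := by
    simp only [sub_mul, mul_sub, one_mul, mul_one]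
    rw [Jmul, cardO]
    module
  -- the four pieces
  have e1 : ((1 : Matrix (Option F) (Option F) ℝ)
        ⊗ₖ (Jmat (F × F) - (1 : Matrix F F ℝ) ⊗ₖ Jmat F))
      * ((1 : Matrix (Option F) (Option F) ℝ)
        ⊗ₖ (Jmat (F × F) - (1 : Matrix F F ℝ) ⊗ₖ Jmat F))
      = ((Fintype.card F : ℝ) ^ 2 - 2 * (Fintype.card F : ℝ)) •
          ((1 : Matrix (Option F) (Option F) ℝ) ⊗ₖ Jmat (F × F))
        + (Fintype.card F : ℝ) •
          ((1 : Matrix (Option F) (Option F) ℝ) ⊗ₖ ((1 : Matrix F F ℝ) ⊗ₖ Jmat F)) := by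
    rw [← mul_kronecker_mul, Matrix.mul_one, hBB, kronecker_add, kronecker_smul, kronecker_smul]
  have e2 : ((1 : Matrix (Option F) (Option F) ℝ)
        ⊗ₖ (Jmat (F × F) - (1 : Matrix F F ℝ) ⊗ₖ Jmat F))
      * (∑ b : F, P (some b) ⊗ₖ (Cmat F b β * Rmat F))
      = ((Fintype.card F : ℝ) - 1) • (Jmat (Option F) ⊗ₖ Jmat (F × F))
        - ((Fintype.card F : ℝ) - 1) •
          ((1 : Matrix (Option F) (Option F) ℝ) ⊗ₖ Jmat (F × F)) := by
    rw [Matrix.mul_sum]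
    have h : ∀ b ∈ Finset.univ, ((1 : Matrix (Option F) (Option F) ℝ)
          ⊗ₖ (Jmat (F × F) - (1 : Matrix F F ℝ) ⊗ₖ Jmat F)) * (P (some b) ⊗ₖ (Cmat F b β * Rmat F))
        = ((Fintype.card F : ℝ) - 1) • (P (some b) ⊗ₖ Jmat (F × F)) := by
      intro b _
      rw [← mul_kronecker_mul, Matrix.one_mul, hBE, kronecker_smul]
    rw [Finset.sum_congr rfl h, ← Finset.smul_sum, ← sum_kron, sumP, sub_kron, smul_sub]
  have e3 : (∑ a : F, P (some a) ⊗ₖ (Cmat F a α * Rmat F))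
      * ((1 : Matrix (Option F) (Option F) ℝ)
        ⊗ₖ (Jmat (F × F) - (1 : Matrix F F ℝ) ⊗ₖ Jmat F))
      = ((Fintype.card F : ℝ) - 1) • (Jmat (Option F) ⊗ₖ Jmat (F × F))
        - ((Fintype.card F : ℝ) - 1) •
          ((1 : Matrix (Option F) (Option F) ℝ) ⊗ₖ Jmat (F × F)) := by
    rw [Matrix.sum_mul]
    have h : ∀ a ∈ Finset.univ, (P (some a) ⊗ₖ (Cmat F a α * Rmat F))
          * ((1 : Matrix (Option F) (Option F) ℝ)
            ⊗ₖ (Jmat (F × F) - (1 : Matrix F F ℝ) ⊗ₖ Jmat F))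
        = ((Fintype.card F : ℝ) - 1) • (P (some a) ⊗ₖ Jmat (F × F)) := by
      intro a _
      rw [← mul_kronecker_mul, Matrix.mul_one, hDB, kronecker_smul]
    rw [Finset.sum_congr rfl h, ← Finset.smul_sum, ← sum_kron, sumP, sub_kron, smul_sub]
  have e4 : (∑ a : F, P (some a) ⊗ₖ (Cmat F a α * Rmat F))
      * (∑ b : F, P (some b) ⊗ₖ (Cmat F b β * Rmat F))
      = ((Fintype.card F : ℝ) ^ 2) •
          ((1 : Matrix (Option F) (Option F) ℝ) ⊗ₖ ((1 : Matrix F F ℝ) ⊗ₖ phi F (α - β)))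
        + ((Fintype.card F : ℝ) - 1) • (Jmat (Option F) ⊗ₖ Jmat (F × F))
        + (1 : Matrix (Option F) (Option F) ℝ) ⊗ₖ Jmat (F × F)
        - (Fintype.card F : ℝ) •
          ((1 : Matrix (Option F) (Option F) ℝ) ⊗ₖ ((1 : Matrix F F ℝ) ⊗ₖ Jmat F)) := by
    rw [Finset.sum_mul_sum]
    have h : ∀ a ∈ (Finset.univ : Finset F), ∑ b : F,
          (P (some a) ⊗ₖ (Cmat F a α * Rmat F)) * (P (some b) ⊗ₖ (Cmat F b β * Rmat F))
        = (∑ b : F, (P (some a) * P (some b)) ⊗ₖ Jmat (F × F))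
          + ((Fintype.card F : ℝ) •
              ((1 : Matrix (Option F) (Option F) ℝ) ⊗ₖ Cmat F a (α - β))
            - (1 : Matrix (Option F) (Option F) ℝ) ⊗ₖ Jmat (F × F)) := by
      intro a _
      have step : ∑ b : F,
            (P (some a) ⊗ₖ (Cmat F a α * Rmat F)) * (P (some b) ⊗ₖ (Cmat F b β * Rmat F))
          = ∑ b : F, (P (some a) * P (some b)) ⊗ₖ (Cmat F a α * Cmat F b (-β)) := by
        refine Finset.sum_congr rfl (fun b _ => ?_)
        rw [← mul_kronecker_mul, hDE]
      rw [step, sum_eq_offdiag _ (fun b => (P (some a) * P (some b)) ⊗ₖ Jmat (F × F)) a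
        (fun b hb => by rw [CmulC_ne F (Ne.symm hb)])]
      congr 1
      rw [hPsq, CmulC_same]
      have : α + -β = α - β := by ring
      rw [this, kronecker_smul]
    rw [Finset.sum_congr rfl h, Finset.sum_add_distrib]
    have hfirst : ∑ a : F, ∑ b : F, (P (some a) * P (some b)) ⊗ₖ Jmat (F × F)
        = ((Fintype.card F : ℝ) - 1) • (Jmat (Option F) ⊗ₖ Jmat (F × F))
          + (1 : Matrix (Option F) (Option F) ℝ) ⊗ₖ Jmat (F × F) := by
      have : ∑ a : F, ∑ b : F, (P (some a) * P (some b)) ⊗ₖ Jmat (F × F)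
          = ((∑ a : F, P (some a)) * (∑ b : F, P (some b))) ⊗ₖ Jmat (F × F) := by
        rw [Finset.sum_mul_sum, sum_kron]
        exact Finset.sum_congr rfl (fun a _ => by rw [sum_kron])
      rw [this, sumP, hJO, add_kronecker, smul_kronecker]
    have hsecond : ∑ a : F, ((Fintype.card F : ℝ) •
          ((1 : Matrix (Option F) (Option F) ℝ) ⊗ₖ Cmat F a (α - β))
        - (1 : Matrix (Option F) (Option F) ℝ) ⊗ₖ Jmat (F × F))
        = ((Fintype.card F : ℝ) ^ 2) •
            ((1 : Matrix (Option F) (Option F) ℝ) ⊗ₖ ((1 : Matrix F F ℝ) ⊗ₖ phi F (α - β)))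
          + (Fintype.card F : ℝ) • ((1 : Matrix (Option F) (Option F) ℝ) ⊗ₖ Jmat (F × F))
          - (Fintype.card F : ℝ) •
            ((1 : Matrix (Option F) (Option F) ℝ) ⊗ₖ ((1 : Matrix F F ℝ) ⊗ₖ Jmat F))
          - (Fintype.card F : ℝ) • ((1 : Matrix (Option F) (Option F) ℝ) ⊗ₖ Jmat (F × F)) := by
      rw [Finset.sum_sub_distrib, ← Finset.smul_sum, ← kron_sum, sum_C, Finset.sum_const,
        Finset.card_univ]
      rw [kron_sub, kronecker_add, kronecker_smul, ← Nat.cast_smul_eq_nsmul ℝ]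
      module
    rw [hfirst, hsecond]
    module
  -- assemble
  rw [Nmat, Nmat, add_mul, mul_add, mul_add, e1, e2, e3, e4, ← kron_J (Option F) (F × F)]
  module
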